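/- Let I : (0,∞) → (0,∞) be twice differentiable with I'(V) ≥ 0 for all V, and let χ < 0 be a real constant. Suppose I''(V) ≤ 2πχ/I(V)² + 3/I(V) − 3·I'(V)²/(4·I(V)) for all V. Then the Hawking mass m(V) = √(I(V))·(2πχ + I(V) − (1/4)·I'(V)²·I(V)) is monotone non-decreasing. -/

import Mathlib

open Real

theorem hawking_mass_monotone (I I' I'' : ℝ → ℝ) (χ : ℝ) (hχ : χ < 0)
    (hI : ∀ V, 0 < V → HasDerivAt I (I' V) V)
    (hI' : ∀ V, 0 < V → HasDerivAt I' (I'' V) V)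
    (hpos : ∀ V, 0 < V → 0 < I V)
    (hmono : ∀ V, 0 < V → 0 ≤ I' V)
    (hsecond : ∀ V, 0 < V →
      I'' V ≤ 2*π*χ / (I V)^2 + 3 / I V - 3 * (I' V)^2 / (4 * I V)) :
    MonotoneOn (fun V => Real.sqrt (I V) * (2*π*χ + I V - (1/4) * (I' V)^2 * I V))
      (Set.Ioi (0:ℝ)) := by
  set f : ℝ → ℝ := fun V => Real.sqrt (I V) * (2*π*χ + I V - (1/4) * (I' V)^2 * I V)
  have key : ∀ V, 0 < V → HasDerivAt f
      ((I' V / (2 * Real.sqrt (I V))) * (2*π*χ + I V - (1/4) * (I' V)^2 * I V)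
        + Real.sqrt (I V) * (I' V - ((1/4) * (2 * (I' V)^1 * I'' V) * I V
          + (1/4) * (I' V)^2 * I' V))) V := by
    intro V hV
    have hs : HasDerivAt (fun x => Real.sqrt (I x)) (I' V / (2 * Real.sqrt (I V))) V :=
      (hI V hV).sqrt (ne_of_gt (hpos V hV))
    have hsq : HasDerivAt (fun x => (I' x)^2) (2 * (I' V)^1 * I'' V) V := by
      simpa using (hI' V hV).fun_pow 2
    have hprod : HasDerivAt (fun x => (1/4) * (I' x)^2 * I x)
        ((1/4) * (2 * (I' V)^1 * I'' V) * I V + (1/4) * (I' V)^2 * I' V) V :=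
      (hsq.const_mul (1/4)).mul (hI V hV)
    have hg : HasDerivAt (fun x => 2*π*χ + I x - (1/4) * (I' x)^2 * I x)
        (I' V - ((1/4) * (2 * (I' V)^1 * I'' V) * I V + (1/4) * (I' V)^2 * I' V)) V := by
      simpa using ((hI V hV).const_add (2*π*χ)).fun_sub hprod
    simpa [f] using hs.fun_mul hg
  apply monotoneOn_of_deriv_nonneg (convex_Ioi 0)
  · exact fun x hx => ((key x hx).differentiableAt.continuousAt).continuousWithinAt
  · rw [interior_Ioi]
    exact fun x hx => (key x hx).differentiableAt.differentiableWithinAt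
  · rw [interior_Ioi]
    intro V hV
    have hV : (0:ℝ) < V := hV
    rw [(key V hV).deriv]
    have ha : 0 < I V := hpos V hV
    have hb : 0 ≤ I' V := hmono V hV
    have hc := hsecond V hV
    have hs : 0 < Real.sqrt (I V) := Real.sqrt_pos.mpr ha
    have hs2 : Real.sqrt (I V) ^ 2 = I V := Real.sq_sqrt ha.le
    have hc' : (I V)^2 * I'' V ≤ 2*π*χ + 3 * I V - (3/4) * I V * (I' V)^2 := by
      have h1 : (I V)^2 * (2*π*χ / (I V)^2) = 2*π*χ := by field_simp
      have h2 : (I V)^2 * (3 / I V) = 3 * I V := by field_simp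
      have h3 : (I V)^2 * (3 * (I' V)^2 / (4 * I V)) = (3/4) * I V * (I' V)^2 := by
        field_simp
      nlinarith [mul_le_mul_of_nonneg_left hc (sq_nonneg (I V))]
    have expand : (I' V / (2 * Real.sqrt (I V))) * (2*π*χ + I V - (1/4) * (I' V)^2 * I V)
        + Real.sqrt (I V) * (I' V - ((1/4) * (2 * (I' V)^1 * I'' V) * I V
          + (1/4) * (I' V)^2 * I' V))
        = (I' V * (2*π*χ + 3 * I V - (3/4) * I V * (I' V)^2 - (I V)^2 * I'' V))
          / (2 * Real.sqrt (I V)) := by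
      rw [eq_div_iff (by positivity)]
      have hss : Real.sqrt (I V) * Real.sqrt (I V) = I V := Real.mul_self_sqrt ha.le
      have hs3 : Real.sqrt (I V) ^ 3 = I V * Real.sqrt (I V) := by
        rw [pow_succ, hs2]
      field_simp
      ring_nf
      linear_combination (-4 * I' V * I V * I'' V + 8 * I' V - 2 * I' V ^ 3) * hs2
    rw [expand]
    have hbr : 0 ≤ I' V * (2*π*χ + 3 * I V - (3/4) * I V * (I' V)^2 - (I V)^2 * I'' V) :=
      mul_nonneg hb (by linarith)
    positivity
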